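/- Let X ⊆ ℤ^n be c_1-connected, equipped with the Euclidean metric d. Let S,T: X → X with T c_1-continuous (i.e., whenever x and y are c_1-adjacent, T(x) = T(y) or T(x) and T(y) are c_1-adjacent), and suppose S and T commute (S∘T = T∘S). Suppose there exists β: [0,∞) → [0,1) such that d(S(x),S(y)) ≤ β(d(T(x),T(y)))·d(T(x),T(y)) for all x,y ∈ X. Then S is a constant function, and S and T have a common fixed point (there exists x_0 ∈ X with S(x_0) = x_0 and T(x_0) = x_0). -/
import Mathlib


open Filter Topology

/-- Points of ℤ^n are c₁-adjacent if they differ by exactly 1 in exactly one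
coordinate and agree in all other coordinates. -/
def C1Adj {n : ℕ} (x y : Fin n → ℤ) : Prop :=
  ∃ i, (x i - y i).natAbs = 1 ∧ ∀ j, j ≠ i → x j = y j

/-- A subset of ℤ^n is c₁-connected if any two of its points are joined by a
path in the set whose consecutive points are c₁-adjacent. -/
def C1Connected {n : ℕ} (X : Set (Fin n → ℤ)) : Prop :=
  ∀ x ∈ X, ∀ y ∈ X,
    Relation.ReflTransGen (fun a b => a ∈ X ∧ b ∈ X ∧ C1Adj a b) x y

/-- The Euclidean metric on ℤ^n. -/
noncomputable def euclDist {n : ℕ} (x y : Fin n → ℤ) : ℝ :=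
  Real.sqrt (∑ i, ((x i : ℝ) - (y i : ℝ)) ^ 2)

lemma euclDist_nonneg {n : ℕ} (x y : Fin n → ℤ) : 0 ≤ euclDist x y :=
  Real.sqrt_nonneg _

lemma euclDist_self {n : ℕ} (x : Fin n → ℤ) : euclDist x x = 0 := by
  simp [euclDist]

lemma euclDist_lt_one {n : ℕ} {x y : Fin n → ℤ} (h : euclDist x y < 1) : x = y := by
  by_contra hne
  have : ∃ i, x i ≠ y i := by
    by_contra hc
    push_neg at hc
    exact hne (funext hc)
  obtain ⟨i, hi⟩ := this
  have h1 : (1 : ℝ) ≤ ((x i : ℝ) - (y i : ℝ)) ^ 2 := by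
    have h0 : x i - y i ≠ 0 := sub_ne_zero.mpr hi
    have hab : (1 : ℤ) ≤ |x i - y i| := Int.one_le_abs (by omega)
    have h2 : (1 : ℤ) ≤ (x i - y i) ^ 2 := by nlinarith [sq_abs (x i - y i)]
    have h3 : ((1 : ℤ) : ℝ) ≤ (((x i - y i) ^ 2 : ℤ) : ℝ) := Int.cast_le.mpr h2
    push_cast at h3
    linarith
  have hsum : (1 : ℝ) ≤ ∑ j, ((x j : ℝ) - (y j : ℝ)) ^ 2 :=
    le_trans h1 (Finset.single_le_sum (f := fun j => ((x j : ℝ) - (y j : ℝ)) ^ 2)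
      (fun j _ => sq_nonneg _) (Finset.mem_univ i))
  have : (1:ℝ) ≤ euclDist x y := by
    rw [euclDist, show (1:ℝ) = Real.sqrt 1 by simp]
    exact Real.sqrt_le_sqrt hsum
  linarith

lemma euclDist_adj {n : ℕ} {x y : Fin n → ℤ} (h : C1Adj x y) : euclDist x y = 1 := by
  obtain ⟨i, hi, hj⟩ := h
  have hsum : ∑ j, ((x j : ℝ) - (y j : ℝ)) ^ 2 = 1 := by
    rw [Finset.sum_eq_single i]
    · have h2 : (x i - y i) ^ 2 = 1 := by
        have : |x i - y i| = 1 := by rw [Int.abs_eq_natAbs, hi]; norm_num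
        nlinarith [sq_abs (x i - y i)]
      have h3 : (((x i - y i) ^ 2 : ℤ) : ℝ) = 1 := by rw [h2]; norm_num
      push_cast at h3
      linarith
    · intro j _ hji
      have := hj j hji
      simp [this]
    · intro h; exact absurd (Finset.mem_univ i) h
  rw [euclDist, hsum, Real.sqrt_one]

/-- If (T,S) is a pair of Geraghty contraction maps on a nonempty
c₁-connected subset of ℤ^n with the Euclidean metric, T is c₁-continuous, and S
and T commute, then S is constant and S and T have a common fixed point. -/
theorem geraghty_pair_common_fixed_point
    {n : ℕ} (X : Set (Fin n → ℤ)) (hne : X.Nonempty) (hconn : C1Connected X)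
    (S T : (Fin n → ℤ) → (Fin n → ℤ))
    (hS : ∀ x ∈ X, S x ∈ X) (hT : ∀ x ∈ X, T x ∈ X)
    (hTc : ∀ x ∈ X, ∀ y ∈ X, C1Adj x y → T x = T y ∨ C1Adj (T x) (T y))
    (hcomm : ∀ x ∈ X, S (T x) = T (S x))
    (β : ℝ → ℝ) (hβ : ∀ t, 0 ≤ t → 0 ≤ β t ∧ β t < 1)
    (hcontr : ∀ x ∈ X, ∀ y ∈ X,
      euclDist (S x) (S y) ≤ β (euclDist (T x) (T y)) * euclDist (T x) (T y)) :
    (∀ x ∈ X, ∀ y ∈ X, S x = S y) ∧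
      ∃ x₀ ∈ X, S x₀ = x₀ ∧ T x₀ = x₀ := by
  have key : ∀ x ∈ X, ∀ y ∈ X, C1Adj x y → S x = S y := by
    intro x hx y hy hadj
    set t := euclDist (T x) (T y) with ht
    have ht1 : t ≤ 1 := by
      rcases hTc x hx y hy hadj with h | h
      · rw [ht, h, euclDist_self]; norm_num
      · rw [ht, euclDist_adj h]
    have ht0 : 0 ≤ t := euclDist_nonneg _ _
    obtain ⟨hb0, hb1⟩ := hβ t ht0
    have hlt : β t * t < 1 := by nlinarith
    have := hcontr x hx y hy
    exact euclDist_lt_one (lt_of_le_of_lt this hlt)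
  have const : ∀ x ∈ X, ∀ y ∈ X, S x = S y := by
    intro x hx y hy
    induction hconn x hx y hy with
    | refl => rfl
    | tail h1 h2 ih => exact (ih h2.1).trans (key _ h2.1 _ h2.2.1 h2.2.2)
  refine ⟨const, ?_⟩
  obtain ⟨x₀, hx₀⟩ := hne
  set c := S x₀ with hc
  have hcX : c ∈ X := hS x₀ hx₀
  have hSc : S c = c := const c hcX x₀ hx₀
  have hTcX : T c ∈ X := hT c hcX
  have hTfix : T c = c := by
    have h1 : S (T c) = T (S c) := hcomm c hcX
    rw [hSc] at h1
    have h2 : S (T c) = c := const (T c) hTcX x₀ hx₀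
    rw [h2] at h1
    exact h1.symm
  exact ⟨c, hcX, hSc, hTfix⟩
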